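/- The cardinality constrained matroid polytope P^c(E) is full-dimensional (its affine hull is all of ℝ^E) unless m = 2, c_1 = 0, c_2 = r(E), and E is separable; that is, dim P^c(E) = |E| if and only if it is not the case that c = (0, r(E)) and E is separable. -/
import Mathlib


open Finset

/-- A (loopless) matroid on a finite ground set, given by its independent sets. -/
structure FinMatroid (α : Type*) [Fintype α] [DecidableEq α] where
  Indep : Finset α → Prop
  empty_indep : Indep ∅
  subset_indep : ∀ ⦃I J : Finset α⦄, Indep J → I ⊆ J → Indep I
  exchange : ∀ ⦃I J : Finset α⦄, Indep I → Indep J → I.card < J.card →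
    ∃ e ∈ J \ I, Indep (insert e I)
  loopless : ∀ e : α, Indep {e}

variable {α : Type*} [Fintype α] [DecidableEq α]

open Classical in
/-- The rank of a set: the maximum cardinality of an independent subset. -/
noncomputable def FinMatroid.r (M : FinMatroid α) (F : Finset α) : ℕ :=
  (F.powerset.filter M.Indep).sup Finset.card

/-- incidence vector -/
noncomputable def incVec (I : Finset α) : α → ℝ := fun e => if e ∈ I then 1 else 0

/-- x(S) = ∑_{e ∈ S} x_e -/
noncomputable def fsum (x : α → ℝ) (S : Finset α) : ℝ := ∑ e ∈ S, x e

/-- closed set -/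
def FinMatroid.ClosedSet (M : FinMatroid α) (F : Finset α) : Prop :=
  ∀ e ∉ F, M.r F < M.r (insert e F)

/-- F is separable -/
def FinMatroid.Separable (M : FinMatroid α) (F : Finset α) : Prop :=
  ∃ F₁ F₂ : Finset α, F₁ ≠ ∅ ∧ F₂ ≠ ∅ ∧ Disjoint F₁ F₂ ∧ F₁ ∪ F₂ = F ∧
    M.r F₁ + M.r F₂ ≤ M.r F

def FinMatroid.Inseparable (M : FinMatroid α) (F : Finset α) : Prop :=
  ¬ M.Separable F

/-- the k-rank r^k(F) = k - r(E \ F), as an integer -/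
noncomputable def FinMatroid.krank (M : FinMatroid α) (k : ℕ) (F : Finset α) : ℤ :=
  (k : ℤ) - (M.r Fᶜ : ℤ)

/-- F is k-separable -/
noncomputable def FinMatroid.kSeparable (M : FinMatroid α) (k : ℕ) (F : Finset α) : Prop :=
  ∃ F₁ F₂ : Finset α, F₁ ≠ ∅ ∧ F₂ ≠ ∅ ∧ Disjoint F₁ F₂ ∧ F₁ ∪ F₂ = F ∧
    M.krank k F₁ + M.krank k F₂ = M.krank k F

noncomputable def FinMatroid.kInseparable (M : FinMatroid α) (k : ℕ) (F : Finset α) : Prop :=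
  ¬ M.kSeparable k F

/-- convex hull of incidence vectors of independent sets of cardinality exactly k -/
noncomputable def exactPolytope (M : FinMatroid α) (k : ℕ) : Set (α → ℝ) :=
  convexHull ℝ {x | ∃ I : Finset α, M.Indep I ∧ I.card = k ∧ x = incVec I}

/-- the cardinality constrained matroid polytope P^c(E) -/
noncomputable def cardPolytope (M : FinMatroid α) {m : ℕ} (c : Fin m → ℕ) : Set (α → ℝ) :=
  convexHull ℝ {x | ∃ I : Finset α, M.Indep I ∧ (∃ p : Fin m, I.card = c p) ∧ x = incVec I}

/-- dimension of (the affine hull of) a subset of ℝ^E -/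
noncomputable def polyDim (s : Set (α → ℝ)) : ℕ :=
  Module.finrank ℝ (affineSpan ℝ s).direction

/-- `a · x ≤ a₀` defines a facet of `P` -/
noncomputable def IsFacet (P : Set (α → ℝ)) (a : α → ℝ) (a₀ : ℝ) : Prop :=
  (∀ x ∈ P, ∑ e, a e * x e ≤ a₀) ∧
  polyDim {x ∈ P | ∑ e, a e * x e = a₀} + 1 = polyDim P

/-! ### Auxiliary lemmas -/

section Aux

open Classical

/-- rank is attained -/
lemma FinMatroid.exists_rank_set (M : FinMatroid α) (F : Finset α) :
    ∃ I, I ⊆ F ∧ M.Indep I ∧ I.card = M.r F := by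
  classical
  have hne : (F.powerset.filter M.Indep).Nonempty :=
    ⟨∅, by simp [M.empty_indep]⟩
  obtain ⟨I, hI, hIc⟩ := Finset.exists_mem_eq_sup _ hne Finset.card
  simp only [mem_filter, mem_powerset] at hI
  exact ⟨I, hI.1, hI.2, hIc.symm⟩

lemma FinMatroid.card_le_r (M : FinMatroid α) {I F : Finset α} (hI : M.Indep I) (hIF : I ⊆ F) :
    I.card ≤ M.r F := by
  classical
  exact Finset.le_sup (by simp [mem_filter, mem_powerset, hIF, hI])

/-- extension to any cardinality up to rank -/
lemma FinMatroid.exists_extension (M : FinMatroid α) {I : Finset α} (hI : M.Indep I)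
    {k : ℕ} (hk : I.card ≤ k) (hkr : k ≤ M.r Finset.univ) :
    ∃ J, I ⊆ J ∧ M.Indep J ∧ J.card = k := by
  classical
  obtain ⟨n, hn⟩ : ∃ n, k - I.card = n := ⟨_, rfl⟩
  induction n generalizing I with
  | zero => exact ⟨I, subset_rfl, hI, by omega⟩
  | succ n ih =>
    obtain ⟨B, _, hB, hBc⟩ := M.exists_rank_set Finset.univ
    have hlt : I.card < B.card := by omega
    obtain ⟨e, he, hei⟩ := M.exchange hI hB hlt
    have he' : e ∉ I := (Finset.mem_sdiff.mp he).2
    have hcard : (insert e I).card = I.card + 1 := Finset.card_insert_of_notMem he'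
    obtain ⟨J, hJ1, hJ2, hJ3⟩ := ih hei (by omega) (by omega)
    exact ⟨J, (Finset.subset_insert e I).trans hJ1, hJ2, hJ3⟩

lemma FinMatroid.one_le_r (M : FinMatroid α) {F : Finset α} (hF : F.Nonempty) :
    1 ≤ M.r F := by
  obtain ⟨e, he⟩ := hF
  have := M.card_le_r (M.loopless e) (by simpa using he)
  simpa using this

lemma FinMatroid.r_le_r_univ (M : FinMatroid α) (F : Finset α) : M.r F ≤ M.r Finset.univ := by
  obtain ⟨I, _, hI, hIc⟩ := M.exists_rank_set F
  rw [← hIc]; exact M.card_le_r hI (Finset.subset_univ I)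

lemma swap_inter_card (B : Finset α) (F : Finset α) (e f : α) (hf : f ∈ B) (he : e ∉ B)
    (hiff : e ∈ F ↔ f ∈ F) : ((insert e (B.erase f)) ∩ F).card = (B ∩ F).card := by
  by_cases hfF : f ∈ F
  · have heF : e ∈ F := hiff.mpr hfF
    have h1 : (insert e (B.erase f)) ∩ F = insert e ((B ∩ F).erase f) := by
      ext a
      simp only [Finset.mem_inter, Finset.mem_insert, Finset.mem_erase]
      constructor
      · rintro ⟨h | h, hF2⟩
        · exact Or.inl h
        · exact Or.inr ⟨h.1, h.2, hF2⟩
      · rintro (h | ⟨h1, h2, h3⟩)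
        · exact ⟨Or.inl h, h ▸ heF⟩
        · exact ⟨Or.inr ⟨h1, h2⟩, h3⟩
    rw [h1, Finset.card_insert_of_notMem (by simp only [Finset.mem_erase, Finset.mem_inter]; tauto),
      Finset.card_erase_of_mem (Finset.mem_inter.mpr ⟨hf, hfF⟩)]
    have : (B ∩ F).card ≥ 1 := Finset.card_pos.mpr ⟨f, Finset.mem_inter.mpr ⟨hf, hfF⟩⟩
    omega
  · have heF : e ∉ F := fun h => hfF (hiff.mp h)
    have h1 : (insert e (B.erase f)) ∩ F = B ∩ F := by
      ext a
      simp only [Finset.mem_inter, Finset.mem_insert, Finset.mem_erase]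
      constructor
      · rintro ⟨h | h, hF2⟩
        · exact absurd hF2 (h ▸ heF)
        · exact ⟨h.2, hF2⟩
      · rintro ⟨h1, h2⟩
        refine ⟨Or.inr ⟨fun hef => hfF (hef ▸ h2), h1⟩, h2⟩
    rw [h1]

/-- if F is closed under basis exchanges, |B ∩ F| is constant over bases -/
lemma FinMatroid.basis_inter_card_const (M : FinMatroid α) (F : Finset α)
    (hF : ∀ ⦃B : Finset α⦄ ⦃e f : α⦄, M.Indep B → B.card = M.r Finset.univ → f ∈ B → e ∉ B →
      M.Indep (insert e (B.erase f)) → (e ∈ F ↔ f ∈ F)) :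
    ∀ B B', M.Indep B → B.card = M.r Finset.univ → M.Indep B' → B'.card = M.r Finset.univ →
      (B ∩ F).card = (B' ∩ F).card := by
  classical
  suffices h : ∀ n B B', (B \ B').card ≤ n → M.Indep B → B.card = M.r Finset.univ →
      M.Indep B' → B'.card = M.r Finset.univ → (B ∩ F).card = (B' ∩ F).card by
    intro B B' h1 h2 h3 h4
    exact h (B \ B').card B B' le_rfl h1 h2 h3 h4
  intro n
  induction n with
  | zero =>
    intro B B' hcard h1 h2 h3 h4
    have : B = B' := by
      rw [Nat.le_zero, Finset.card_eq_zero, Finset.sdiff_eq_empty_iff_subset] at hcard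
      exact Finset.eq_of_subset_of_card_le hcard (by omega)
    rw [this]
  | succ n ih =>
    intro B B' hcard h1 h2 h3 h4
    by_cases hBB : B \ B' = ∅
    · have : B = B' := by
        rw [Finset.sdiff_eq_empty_iff_subset] at hBB
        exact Finset.eq_of_subset_of_card_le hBB (by omega)
      rw [this]
    · obtain ⟨f, hf⟩ := Finset.nonempty_iff_ne_empty.mpr hBB
      have hfB : f ∈ B := (Finset.mem_sdiff.mp hf).1
      have hfB' : f ∉ B' := (Finset.mem_sdiff.mp hf).2
      set I := B.erase f with hI
      have hIind : M.Indep I := M.subset_indep h1 (Finset.erase_subset f B)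
      have hIcard : I.card = B.card - 1 := Finset.card_erase_of_mem hfB
      have hrpos : 1 ≤ B.card := Finset.card_pos.mpr ⟨f, hfB⟩
      have hlt : I.card < B'.card := by omega
      obtain ⟨e, he, hei⟩ := M.exchange hIind h3 hlt
      have heB' : e ∈ B' := (Finset.mem_sdiff.mp he).1
      have heI : e ∉ I := (Finset.mem_sdiff.mp he).2
      have heB : e ∉ B := by
        intro h
        rcases eq_or_ne e f with h' | h'
        · exact hfB' (h' ▸ heB')
        · exact heI (Finset.mem_erase.mpr ⟨h', h⟩)
      set B'' := insert e I with hB''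
      have hB''card : B''.card = M.r Finset.univ := by
        rw [hB'', Finset.card_insert_of_notMem heI]
        omega
      have hiff : e ∈ F ↔ f ∈ F := hF h1 h2 hfB heB hei
      have hdiff : B'' \ B' = (B \ B').erase f := by
        ext a
        simp only [hB'', hI, Finset.mem_sdiff, Finset.mem_insert, Finset.mem_erase] at *
        constructor
        · rintro ⟨h1' | h1', h2'⟩
          · exact absurd heB' (h1' ▸ h2')
          · exact ⟨h1'.1, h1'.2, h2'⟩
        · rintro ⟨h1', h2', h3'⟩
          exact ⟨Or.inr ⟨h1', h2'⟩, h3'⟩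
      have hdcard : (B'' \ B').card ≤ n := by
        rw [hdiff, Finset.card_erase_of_mem hf]
        omega
      have hstep : (B'' ∩ F).card = (B ∩ F).card := swap_inter_card B F e f hfB heB hiff
      rw [← hstep]
      exact ih B'' B' hdcard hei hB''card h3 h4

lemma incVec_eq_sum (I : Finset α) : incVec I = ∑ f ∈ I, Pi.single f (1:ℝ) := by
  funext a
  rw [Finset.sum_apply]
  simp only [incVec, Pi.single_apply]
  rw [Finset.sum_ite_eq I a (fun _ => (1:ℝ))]

lemma incVec_sdiff {I J : Finset α} (h : I ⊆ J) :
    incVec J - incVec I = ∑ f ∈ J \ I, Pi.single f (1:ℝ) := by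
  rw [incVec_eq_sum, incVec_eq_sum, eq_comm, Finset.sum_sdiff_eq_sub h]

lemma span_singles_top (D : Submodule ℝ (α → ℝ)) (h : ∀ g : α, Pi.single g (1:ℝ) ∈ D) :
    D = ⊤ := by
  rw [eq_top_iff]
  intro x _
  have hx : x = ∑ g : α, x g • (Pi.single g (1:ℝ) : α → ℝ) := by
    funext a
    rw [Finset.sum_apply]
    simp [Pi.single_apply, mul_comm]
  rw [hx]
  exact Submodule.sum_mem D (fun g _ => Submodule.smul_mem D _ (h g))

/-- case k₁ ≥ 1 -/
lemma case_one (M : FinMatroid α) (D : Submodule ℝ (α → ℝ)) (k₁ k₂ : ℕ)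
    (h1 : 1 ≤ k₁) (h12 : k₁ < k₂) (h2r : k₂ ≤ M.r Finset.univ)
    (hD : ∀ I J : Finset α, M.Indep I → I.card = k₁ → M.Indep J → J.card = k₂ →
      incVec J - incVec I ∈ D) (g : α) : Pi.single g (1:ℝ) ∈ D := by
  classical
  obtain ⟨K, hgK, hKind, hKcard⟩ := M.exists_extension (M.loopless g)
    (by rw [Finset.card_singleton]; omega) h2r
  have hgK' : g ∈ K := hgK (Finset.mem_singleton_self g)
  have claimA : ∀ f ∈ K, ∀ f' ∈ K, Pi.single f (1:ℝ) - Pi.single f' 1 ∈ D := by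
    intro f hf f' hf'
    rcases eq_or_ne f f' with rfl | hne
    · simpa using D.zero_mem
    · obtain ⟨T, hT, hTcard⟩ := Finset.exists_subset_card_eq
        (s := (K.erase f).erase f') (n := k₁ - 1)
        (by
          rw [Finset.card_erase_of_mem (Finset.mem_erase.mpr ⟨hne.symm, hf'⟩),
            Finset.card_erase_of_mem hf]
          omega)
      have hfT : f ∉ T := fun h => (Finset.mem_erase.mp (Finset.mem_erase.mp (hT h)).2).1 rfl
      have hf'T : f' ∉ T := fun h => (Finset.mem_erase.mp (hT h)).1 rfl
      have hTK : T ⊆ K := hT.trans ((Finset.erase_subset _ _).trans (Finset.erase_subset _ _))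
      have hIK : insert f T ⊆ K := Finset.insert_subset hf hTK
      have hI'K : insert f' T ⊆ K := Finset.insert_subset hf' hTK
      have hIcard : (insert f T).card = k₁ := by
        rw [Finset.card_insert_of_notMem hfT]; omega
      have hI'card : (insert f' T).card = k₁ := by
        rw [Finset.card_insert_of_notMem hf'T]; omega
      have h1' := hD _ _ (M.subset_indep hKind hIK) hIcard hKind hKcard
      have h2' := hD _ _ (M.subset_indep hKind hI'K) hI'card hKind hKcard
      have : (incVec K - incVec (insert f' T)) - (incVec K - incVec (insert f T)) =
          Pi.single f (1:ℝ) - Pi.single f' 1 := by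
        rw [incVec_eq_sum (insert f T), incVec_eq_sum (insert f' T),
          Finset.sum_insert hfT, Finset.sum_insert hf'T]
        abel
      rw [← this]
      exact D.sub_mem h2' h1'
  obtain ⟨T₀, hT₀, hT₀card⟩ := Finset.exists_subset_card_eq (s := K.erase g) (n := k₁ - 1)
    (by rw [Finset.card_erase_of_mem hgK']; omega)
  have hgT₀ : g ∉ T₀ := fun h => (Finset.mem_erase.mp (hT₀ h)).1 rfl
  have hT₀K : T₀ ⊆ K := hT₀.trans (Finset.erase_subset _ _)
  set I₀ := insert g T₀ with hI₀
  have hI₀K : I₀ ⊆ K := Finset.insert_subset hgK' hT₀K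
  have hI₀card : I₀.card = k₁ := by
    rw [hI₀, Finset.card_insert_of_notMem hgT₀]; omega
  have hmem : incVec K - incVec I₀ ∈ D :=
    hD _ _ (M.subset_indep hKind hI₀K) hI₀card hKind hKcard
  have hsum : ∑ f ∈ K \ I₀, (Pi.single f (1:ℝ) - Pi.single g 1) ∈ D :=
    Submodule.sum_mem D (fun f hf =>
      claimA f ((Finset.sdiff_subset) hf) g hgK')
  have hdiffcard : (K \ I₀).card = k₂ - k₁ := by
    rw [Finset.card_sdiff_of_subset hI₀K]; omega
  have hkey : (incVec K - incVec I₀) - ∑ f ∈ K \ I₀, (Pi.single f (1:ℝ) - Pi.single g 1)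
      = ((k₂ - k₁ : ℕ) : ℝ) • (Pi.single g 1 : α → ℝ) := by
    rw [incVec_sdiff hI₀K, Finset.sum_sub_distrib, Finset.sum_const, hdiffcard]
    funext a
    simp
  have : ((k₂ - k₁ : ℕ) : ℝ) • (Pi.single g 1 : α → ℝ) ∈ D := by
    rw [← hkey]; exact D.sub_mem hmem hsum
  have hnz : ((k₂ - k₁ : ℕ) : ℝ) ≠ 0 := by
    have h : k₂ - k₁ ≠ 0 := by omega
    exact_mod_cast h
  have := D.smul_mem (((k₂ - k₁ : ℕ) : ℝ))⁻¹ this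
  rwa [smul_smul, inv_mul_cancel₀ hnz, one_smul] at this

/-- case (0, k₂) with k₂ < r -/
lemma case_2b (M : FinMatroid α) (D : Submodule ℝ (α → ℝ)) (k₂ : ℕ)
    (h1 : 1 ≤ k₂) (h2r : k₂ + 1 ≤ M.r Finset.univ)
    (hD : ∀ I : Finset α, M.Indep I → I.card = k₂ → incVec I ∈ D) (g : α) :
    Pi.single g (1:ℝ) ∈ D := by
  classical
  obtain ⟨J, hgJ, hJind, hJcard⟩ := M.exists_extension (M.loopless g)
    (by rw [Finset.card_singleton]; omega) h2r
  have hgJ' : g ∈ J := hgJ (Finset.mem_singleton_self g)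
  have herase : ∀ f ∈ J, incVec (J.erase f) ∈ D := fun f hf =>
    hD _ (M.subset_indep hJind (Finset.erase_subset f J))
      (by rw [Finset.card_erase_of_mem hf]; omega)
  have hsum : ∑ f ∈ J, incVec (J.erase f) ∈ D :=
    Submodule.sum_mem D (fun f hf => herase f hf)
  have hcompute : ∑ f ∈ J, incVec (J.erase f) = ((k₂ : ℕ) : ℝ) • (incVec J : α → ℝ) := by
    have hstep : ∀ f ∈ J, incVec (J.erase f) = incVec J - Pi.single f (1:ℝ) := by
      intro f hf
      have h : incVec J - incVec (J.erase f) = ∑ x ∈ J \ J.erase f, Pi.single x (1:ℝ) :=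
        incVec_sdiff (Finset.erase_subset f J)
      rw [Finset.sdiff_erase_self hf, Finset.sum_singleton] at h
      rw [← h]
      abel
    rw [Finset.sum_congr rfl hstep, Finset.sum_sub_distrib, Finset.sum_const, hJcard,
      ← incVec_eq_sum]
    funext a
    simp only [Pi.sub_apply, Pi.smul_apply, smul_eq_mul, nsmul_eq_mul, Nat.cast_add,
      Nat.cast_one, Pi.mul_apply, Pi.add_apply, Pi.one_apply, Pi.natCast_apply]
    ring
  have hJmem : incVec J ∈ D := by
    have h := hsum
    rw [hcompute] at h
    have hnz : ((k₂ : ℕ) : ℝ) ≠ 0 := by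
      have h' : k₂ ≠ 0 := by omega
      exact_mod_cast h'
    have h2 := D.smul_mem (((k₂ : ℕ) : ℝ))⁻¹ h
    rwa [smul_smul, inv_mul_cancel₀ hnz, one_smul] at h2
  have hfin : incVec J - incVec (J.erase g) ∈ D := D.sub_mem hJmem (herase g hgJ')
  rwa [incVec_sdiff (Finset.erase_subset g J), Finset.sdiff_erase_self hgJ',
    Finset.sum_singleton] at hfin

/-- case (0, r) with E inseparable -/
lemma case_2c (M : FinMatroid α) (D : Submodule ℝ (α → ℝ))
    (hr : 1 ≤ M.r Finset.univ) (hins : ¬ M.Separable Finset.univ)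
    (hD : ∀ B : Finset α, M.Indep B → B.card = M.r Finset.univ → incVec B ∈ D)
    (g : α) : Pi.single g (1:ℝ) ∈ D := by
  classical
  have hexch : ∀ ⦃B : Finset α⦄ ⦃e f : α⦄, M.Indep B → B.card = M.r Finset.univ → f ∈ B →
      e ∉ B → M.Indep (insert e (B.erase f)) → Pi.single e (1:ℝ) - Pi.single f 1 ∈ D := by
    intro B e f hB hBc hf he hind
    have heB : e ∉ B.erase f := fun h => he ((Finset.erase_subset f B) h)
    have hcard : (insert e (B.erase f)).card = M.r Finset.univ := by
      rw [Finset.card_insert_of_notMem heB, Finset.card_erase_of_mem hf]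
      have : 1 ≤ B.card := Finset.card_pos.mpr ⟨f, hf⟩
      omega
    have h1 := hD _ hind hcard
    have h2 := hD _ hB hBc
    have heq : incVec (insert e (B.erase f)) - incVec B = Pi.single e 1 - Pi.single f 1 := by
      rw [incVec_eq_sum, incVec_eq_sum, Finset.sum_insert heB,
        ← Finset.sum_erase_add B _ hf]
      abel
    rw [← heq]
    exact D.sub_mem h1 h2
  set F₁ := Finset.univ.filter (fun f => Pi.single g (1:ℝ) - Pi.single f 1 ∈ D) with hF₁
  have hgF₁ : g ∈ F₁ := by
    simp only [hF₁, Finset.mem_filter, Finset.mem_univ, true_and, sub_self]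
    exact D.zero_mem
  have hclaim : ∀ f : α, Pi.single g (1:ℝ) - Pi.single f 1 ∈ D := by
    by_contra hcon
    push_neg at hcon
    obtain ⟨f₀, hf₀⟩ := hcon
    set F₂ := Finset.univ \ F₁ with hF₂
    have hF₂ne : F₂.Nonempty := ⟨f₀, Finset.mem_sdiff.mpr ⟨Finset.mem_univ f₀,
      fun hmem => hf₀ (Finset.mem_filter.mp hmem).2⟩⟩
    have hFprop : ∀ ⦃B : Finset α⦄ ⦃e f : α⦄, M.Indep B → B.card = M.r Finset.univ → f ∈ B →
        e ∉ B → M.Indep (insert e (B.erase f)) → (e ∈ F₁ ↔ f ∈ F₁) := by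
      intro B e f hB hBc hf he hind
      have hd := hexch hB hBc hf he hind
      simp only [hF₁, Finset.mem_filter, Finset.mem_univ, true_and]
      constructor
      · intro h
        have hm := D.add_mem h hd
        have heq2 : (Pi.single g 1 : α → ℝ) - Pi.single e 1 +
            ((Pi.single e 1 : α → ℝ) - Pi.single f 1) =
            (Pi.single g 1 : α → ℝ) - Pi.single f 1 := by abel
        rwa [heq2] at hm
      · intro h
        have hm := D.sub_mem h hd
        have heq2 : (Pi.single g 1 : α → ℝ) - Pi.single f 1 -
            ((Pi.single e 1 : α → ℝ) - Pi.single f 1) =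
            (Pi.single g 1 : α → ℝ) - Pi.single e 1 := by abel
        rwa [heq2] at hm
    have hconst := M.basis_inter_card_const F₁ hFprop
    obtain ⟨I₁, hI₁F, hI₁ind, hI₁c⟩ := M.exists_rank_set F₁
    obtain ⟨B₁, hI₁B, hB₁ind, hB₁c⟩ := M.exists_extension hI₁ind
      (k := M.r Finset.univ) (M.card_le_r hI₁ind (Finset.subset_univ _)) le_rfl
    obtain ⟨I₂, hI₂F, hI₂ind, hI₂c⟩ := M.exists_rank_set F₂
    obtain ⟨B₂, hI₂B, hB₂ind, hB₂c⟩ := M.exists_extension hI₂ind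
      (k := M.r Finset.univ) (M.card_le_r hI₂ind (Finset.subset_univ _)) le_rfl
    have hB₁F : (B₁ ∩ F₁).card = M.r F₁ := by
      refine le_antisymm (M.card_le_r (M.subset_indep hB₁ind Finset.inter_subset_left)
        Finset.inter_subset_right) ?_
      rw [← hI₁c]
      exact Finset.card_le_card (Finset.subset_inter hI₁B hI₁F)
    have hB₂F : (B₂ ∩ F₂).card = M.r F₂ := by
      refine le_antisymm (M.card_le_r (M.subset_indep hB₂ind Finset.inter_subset_left)
        Finset.inter_subset_right) ?_
      rw [← hI₂c]
      exact Finset.card_le_card (Finset.subset_inter hI₂B hI₂F)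
    have h12 : (B₂ ∩ F₁).card = (B₁ ∩ F₁).card := hconst B₂ B₁ hB₂ind hB₂c hB₁ind hB₁c
    have hdisj : Disjoint F₁ F₂ := Finset.disjoint_sdiff
    have hunion : F₁ ∪ F₂ = Finset.univ := Finset.union_sdiff_of_subset (Finset.subset_univ F₁)
    have hpart : (B₂ ∩ F₁).card + (B₂ ∩ F₂).card = B₂.card := by
      rw [← Finset.card_union_of_disjoint (hdisj.mono Finset.inter_subset_right
        Finset.inter_subset_right), ← Finset.inter_union_distrib_left, hunion,
        Finset.inter_univ]
    exact hins ⟨F₁, F₂, Finset.nonempty_iff_ne_empty.mp ⟨g, hgF₁⟩,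
      Finset.nonempty_iff_ne_empty.mp hF₂ne, hdisj, hunion, by omega⟩
  obtain ⟨B, _, hBind, hBc⟩ := M.exists_rank_set Finset.univ
  have hBD := hD B hBind hBc
  have hsum2 : ∑ f ∈ B, (Pi.single f (1:ℝ) - Pi.single g 1) ∈ D := by
    refine Submodule.sum_mem D (fun f _ => ?_)
    have hm := D.neg_mem (hclaim f)
    rwa [neg_sub] at hm
  have hkey : incVec B - ∑ f ∈ B, (Pi.single f (1:ℝ) - Pi.single g 1) =
      ((B.card : ℕ) : ℝ) • (Pi.single g 1 : α → ℝ) := by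
    rw [incVec_eq_sum, Finset.sum_sub_distrib, Finset.sum_const]
    funext a
    simp only [Pi.sub_apply, Finset.sum_apply, Pi.smul_apply, smul_eq_mul, nsmul_eq_mul,
      Pi.mul_apply, Pi.natCast_apply]
    ring
  have hmem : ((B.card : ℕ) : ℝ) • (Pi.single g 1 : α → ℝ) ∈ D := by
    rw [← hkey]; exact D.sub_mem hBD hsum2
  have hnz : ((B.card : ℕ) : ℝ) ≠ 0 := by
    have h' : B.card ≠ 0 := by omega
    exact_mod_cast h'
  have h2 := D.smul_mem (((B.card : ℕ) : ℝ))⁻¹ hmem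
  rwa [smul_smul, inv_mul_cancel₀ hnz, one_smul] at h2

end Aux

set_option maxHeartbeats 1000000 in
/-- P^c(E) is full-dimensional unless c = (0, r(E)) and E is
separable. -/
theorem cardPolytope_fulldim_iff {α : Type*} [Fintype α] [DecidableEq α]
    (M : FinMatroid α)
    {m : ℕ} (c : Fin m → ℕ) (hm : 2 ≤ m) (hmono : StrictMono c)
    (hlast : c ⟨m - 1, by omega⟩ ≤ M.r Finset.univ) :
    polyDim (cardPolytope M c) = Fintype.card α ↔
      ¬ (m = 2 ∧ c ⟨0, by omega⟩ = 0 ∧ c ⟨m - 1, by omega⟩ = M.r Finset.univ ∧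
        M.Separable Finset.univ) := by
  classical
  set V : Set (α → ℝ) :=
    {x | ∃ I : Finset α, M.Indep I ∧ (∃ p : Fin m, I.card = c p) ∧ x = incVec I} with hV
  have hspan : polyDim (cardPolytope M c) =
      Module.finrank ℝ (vectorSpan ℝ V) := by
    unfold polyDim cardPolytope
    rw [affineSpan_convexHull, direction_affineSpan]
  have h0m : (0:ℕ) < m := by omega
  have h1m : (1:ℕ) < m := by omega
  have hm1m : m - 1 < m := by omega
  let p0 : Fin m := ⟨0, h0m⟩
  let p1 : Fin m := ⟨1, h1m⟩
  let plast : Fin m := ⟨m - 1, hm1m⟩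
  have hc01 : c p0 < c p1 := hmono (Fin.mk_lt_mk.mpr (by omega))
  have hc1last : c p1 ≤ c plast := hmono.monotone (Fin.mk_le_mk.mpr (by omega))
  have hlast' : c plast ≤ M.r Finset.univ := hlast
  constructor
  · -- full dim implies not exceptional
    intro hdim
    rintro ⟨hm2, h0, hrc, F₁, F₂, hF₁, hF₂, hdisj, huni, hsep⟩
    rw [hspan] at hdim
    obtain ⟨e₀, he₀⟩ := Finset.nonempty_iff_ne_empty.mpr hF₁
    obtain ⟨f₀, hf₀⟩ := Finset.nonempty_iff_ne_empty.mpr hF₂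
    have hr1pos : 1 ≤ M.r F₁ := M.one_le_r ⟨e₀, he₀⟩
    have hr2pos : 1 ≤ M.r F₂ := M.one_le_r ⟨f₀, hf₀⟩
    set φ : (α → ℝ) →ₗ[ℝ] ℝ :=
      (M.r F₂ : ℝ) • (∑ e ∈ F₁, LinearMap.proj e) -
      (M.r F₁ : ℝ) • (∑ e ∈ F₂, LinearMap.proj e) with hφ
    have hφapp : ∀ x : α → ℝ,
        φ x = (M.r F₂ : ℝ) * ∑ e ∈ F₁, x e - (M.r F₁ : ℝ) * ∑ e ∈ F₂, x e := by
      intro x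
      simp [hφ, LinearMap.sub_apply, LinearMap.smul_apply, LinearMap.sum_apply,
        LinearMap.proj_apply, smul_eq_mul]
    have hind : ∀ (I F : Finset α), ∑ e ∈ F, incVec I e = ((F ∩ I).card : ℝ) := by
      intro I F
      simp only [incVec]
      rw [Finset.sum_boole]
      congr 1
    have hvanish : ∀ v ∈ V, φ v = 0 := by
      rintro v ⟨I, hIind, ⟨p, hp⟩, rfl⟩
      have hpm : p.1 < m := p.2
      have hpcase : c p = 0 ∨ c p = M.r Finset.univ := by
        rcases (by omega : p.1 = 0 ∨ p.1 = 1) with h | h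
        · left
          have hpe : p = ⟨0, by omega⟩ := Fin.val_injective h
          rw [hpe]; exact h0
        · right
          have hpe : p = ⟨m - 1, by omega⟩ :=
            Fin.val_injective (show p.1 = m - 1 by omega)
          rw [hpe]; exact hrc
      rw [hφapp, hind, hind]
      rcases hpcase with h | h
      · have hIe : I = ∅ := Finset.card_eq_zero.mp (hp.trans h)
        subst hIe
        simp
      · have h1 : (F₁ ∩ I).card ≤ M.r F₁ :=
          M.card_le_r (M.subset_indep hIind Finset.inter_subset_right)
            Finset.inter_subset_left
        have h2 : (F₂ ∩ I).card ≤ M.r F₂ :=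
          M.card_le_r (M.subset_indep hIind Finset.inter_subset_right)
            Finset.inter_subset_left
        have h3 : (F₁ ∩ I).card + (F₂ ∩ I).card = I.card := by
          rw [← Finset.card_union_of_disjoint (hdisj.mono Finset.inter_subset_left
            Finset.inter_subset_left), ← Finset.union_inter_distrib_right, huni,
            Finset.univ_inter]
        have h4 : I.card = M.r Finset.univ := hp.trans h
        have h5 : (F₁ ∩ I).card = M.r F₁ ∧ (F₂ ∩ I).card = M.r F₂ := by omega
        rw [h5.1, h5.2]
        ring
    have hle : vectorSpan ℝ V ≤ LinearMap.ker φ := by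
      rw [vectorSpan_def, Submodule.span_le]
      rintro x ⟨v, hv, w, hw, rfl⟩
      simp only [SetLike.mem_coe, LinearMap.mem_ker, vsub_eq_sub, map_sub,
        hvanish v hv, hvanish w hw, sub_zero]
    have he₀F₂ : e₀ ∉ F₂ := fun h => (Finset.disjoint_left.mp hdisj) he₀ h
    have hφe₀ : φ (Pi.single e₀ 1 : α → ℝ) = (M.r F₂ : ℝ) := by
      rw [hφapp]
      have hs1 : ∑ e ∈ F₁, (Pi.single e₀ 1 : α → ℝ) e = 1 := by
        simp only [Pi.single_apply]
        rw [Finset.sum_ite_eq' F₁ e₀ (fun _ => (1:ℝ))]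
        simp [he₀]
      have hs2 : ∑ e ∈ F₂, (Pi.single e₀ 1 : α → ℝ) e = 0 := by
        simp only [Pi.single_apply]
        rw [Finset.sum_ite_eq' F₂ e₀ (fun _ => (1:ℝ))]
        simp [he₀F₂]
      rw [hs1, hs2]
      ring
    have hr2ne : (M.r F₂ : ℝ) ≠ 0 := by
      have h' : M.r F₂ ≠ 0 := by omega
      exact_mod_cast h'
    have hrange : LinearMap.range φ = ⊤ := by
      rw [LinearMap.range_eq_top]
      intro y
      refine ⟨(y / (M.r F₂ : ℝ)) • (Pi.single e₀ 1 : α → ℝ), ?_⟩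
      rw [map_smul, hφe₀, smul_eq_mul]
      field_simp
    have hrk := LinearMap.finrank_range_add_finrank_ker φ
    rw [hrange, finrank_top, Module.finrank_self] at hrk
    have hpi : Module.finrank ℝ (α → ℝ) = Fintype.card α := Module.finrank_pi ℝ
    have hmono' : Module.finrank ℝ (vectorSpan ℝ V) ≤ Module.finrank ℝ (LinearMap.ker φ) :=
      Submodule.finrank_mono hle
    have hpos : 0 < Fintype.card α := Fintype.card_pos_iff.mpr ⟨e₀⟩
    omega
  · -- not exceptional implies full dim
    intro hne
    rw [hspan]
    have hmemdiff : ∀ v ∈ V, ∀ w ∈ V, v - w ∈ vectorSpan ℝ V := by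
      intro v hv w hw
      have h := vsub_mem_vectorSpan ℝ hv hw
      rwa [vsub_eq_sub] at h
    have htop : vectorSpan ℝ V = ⊤ := by
      apply span_singles_top
      intro g
      by_cases h0 : c p0 = 0
      · -- zero vector is a vertex
        have hzero : (0 : α → ℝ) ∈ V := ⟨∅, M.empty_indep, ⟨p0, by simp [h0]⟩, by
          funext a; simp [incVec]⟩
        have hmem0 : ∀ v ∈ V, v ∈ vectorSpan ℝ V := by
          intro v hv
          have h := hmemdiff v hv 0 hzero
          rwa [sub_zero] at h
        by_cases hm3 : 3 ≤ m
        · -- use sizes c p1 < c p2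
          have h2m : (2:ℕ) < m := by omega
          let p2 : Fin m := ⟨2, h2m⟩
          have hc12 : c p1 < c p2 := hmono (Fin.mk_lt_mk.mpr (by omega))
          have hc2last : c p2 ≤ c plast := hmono.monotone (Fin.mk_le_mk.mpr (by omega))
          exact case_one M (vectorSpan ℝ V) (c p1) (c p2) (by omega) hc12
            (le_trans hc2last hlast)
            (fun I J hI hIc hJ hJc => hmemdiff _ ⟨J, hJ, ⟨p2, hJc⟩, rfl⟩
              _ ⟨I, hI, ⟨p1, hIc⟩, rfl⟩) g
        · -- m = 2
          have hm2 : m = 2 := by omega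
          have hplasteq : plast = p1 := Fin.val_injective (by simp [p1, plast, hm2])
          by_cases hcr : c plast = M.r Finset.univ
          · -- inseparable case
            have hins : ¬ M.Separable Finset.univ := fun hsep => hne ⟨hm2, h0, hcr, hsep⟩
            exact case_2c M (vectorSpan ℝ V) (le_trans (by omega : 1 ≤ c p1)
              (by rw [← hcr, hplasteq])) hins
              (fun B hB hBc => hmem0 _ ⟨B, hB, ⟨plast, by rw [hBc, hcr]⟩, rfl⟩) g
          · -- c plast < r univ
            have h1plast : 1 ≤ c plast := by rw [hplasteq]; omega
            have hlt : c plast + 1 ≤ M.r Finset.univ := by omega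
            exact case_2b M (vectorSpan ℝ V) (c plast) h1plast hlt
              (fun I hI hIc => hmem0 _ ⟨I, hI, ⟨plast, hIc⟩, rfl⟩) g
      · -- c p0 ≥ 1
        exact case_one M (vectorSpan ℝ V) (c p0) (c p1) (by omega) hc01
          (le_trans hc1last hlast)
          (fun I J hI hIc hJ hJc => hmemdiff _ ⟨J, hJ, ⟨p1, hJc⟩, rfl⟩
            _ ⟨I, hI, ⟨p0, hIc⟩, rfl⟩) g
    rw [htop, finrank_top]
    exact Module.finrank_pi ℝ
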